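/- Fix d ∈ ℕ and a polynomial P of degree d with P(ℕ₀) ⊆ ℕ₀ and P(0) = 0. For all distinct n₀,...,n_d ∈ ℕ there exist integers z₀,...,z_d with max_i |z_i| ≤ C·M^{d(d+1)/2} and 0 < |Σ_{i=0}^d z_i P(n_i)| ≤ C·M^{d(d+1)/2}, where M = max_{i,j} |n_j − n_i| and C > 0 is a constant depending only on P. -/

import Mathlib

open Finset Polynomial

-- leading coefficient of Lagrange basis
lemma coeff_lagrange_basis {F : Type*} [Field F] {ι : Type*} [DecidableEq ι]
    (s : Finset ι) (v : ι → F) (hvs : Set.InjOn v s) {i : ι} (hi : i ∈ s) :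
    (Lagrange.basis s v i).coeff (#s - 1) = ∏ j ∈ s.erase i, (v i - v j)⁻¹ := by
  have hnd := Lagrange.natDegree_basis hvs hi
  rw [← hnd, ← Polynomial.leadingCoeff, Lagrange.basis, Polynomial.leadingCoeff_prod]
  refine Finset.prod_congr rfl fun j hj => ?_
  have hij : v i ≠ v j := by
    have hjs := Finset.mem_of_mem_erase hj
    have hne := Finset.ne_of_mem_erase hj
    exact fun h => hne (hvs hjs hi h.symm)
  rw [Lagrange.basisDivisor, Polynomial.leadingCoeff_mul, Polynomial.leadingCoeff_C,
    (Polynomial.monic_X_sub_C (v j)).leadingCoeff, mul_one]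

-- key interpolation identity
lemma coeff_eq_sum (d : ℕ) (P : Polynomial ℤ) (hPdeg : P.natDegree = d)
    (x : Fin (d+1) → ℤ) (hx : Function.Injective x) :
    (P.coeff d : ℚ) = ∑ i, ((P.eval (x i) : ℤ) : ℚ) * (∏ j ∈ Finset.univ.erase i, ((x i : ℚ) - (x j : ℚ)))⁻¹ := by
  set v : Fin (d+1) → ℚ := fun i => (x i : ℚ) with hv
  have hvs : Set.InjOn v (Finset.univ : Finset (Fin (d+1))) := by
    intro a _ b _ h
    have : (x a : ℚ) = (x b : ℚ) := h
    exact hx (by exact_mod_cast this)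
  set f : Polynomial ℚ := P.map (Int.castRingHom ℚ) with hf
  have hfd : f.natDegree = d := by
    rw [hf, Polynomial.natDegree_map_eq_of_injective Int.cast_injective P, hPdeg]
  have hcard : #(Finset.univ : Finset (Fin (d+1))) = d + 1 := by simp
  have hdeg : f.degree < #(Finset.univ : Finset (Fin (d+1))) := by
    rw [hcard]
    calc f.degree ≤ (f.natDegree : WithBot ℕ) := Polynomial.degree_le_natDegree
      _ < ((d+1 : ℕ) : WithBot ℕ) := by rw [hfd]; exact_mod_cast Nat.lt_succ_self d
  have hint := Lagrange.eq_interpolate hvs hdeg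
  have hco := congrArg (fun q : Polynomial ℚ => q.coeff d) hint
  simp only [Lagrange.interpolate_apply, Polynomial.finset_sum_coeff,
    Polynomial.coeff_C_mul] at hco
  have heval : ∀ i : Fin (d+1), f.eval (v i) = ((P.eval (x i) : ℤ) : ℚ) := by
    intro i
    show eval ((x i : ℚ)) (P.map (Int.castRingHom ℚ)) = _
    rw [show ((x i : ℚ)) = (Int.castRingHom ℚ) (x i) from rfl, Polynomial.eval_map,
      Polynomial.eval₂_at_apply]
    rfl
  have hcoeff : f.coeff d = (P.coeff d : ℚ) := by rw [hf, Polynomial.coeff_map]; rfl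
  rw [hcoeff] at hco
  rw [hco]
  refine Finset.sum_congr rfl fun i _ => ?_
  rw [heval i]
  congr 1
  have := coeff_lagrange_basis Finset.univ v hvs (Finset.mem_univ i)
  rw [hcard] at this
  simp only [Nat.add_sub_cancel] at this
  rw [this, ← Finset.prod_inv_distrib]

/-- For a polynomial `P` of degree `d` with `P(ℕ₀) ⊆ ℕ₀` and `P(0) = 0`, and distinct
`n₀, …, n_d`, there exist integers `z₀, …, z_d` with `max |z_i| ≤ C·M^{d(d+1)/2}` and
`0 < |∑ z_i P(n_i)| ≤ C·M^{d(d+1)/2}`, where `M = max |n_j - n_i|`. -/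
theorem stmt14 (d : ℕ) (hd : 1 ≤ d) (P : Polynomial ℤ) (hPdeg : P.natDegree = d)
    (hP0 : P.eval 0 = 0) (hval : ∀ n : ℕ, 0 ≤ P.eval (n : ℤ)) :
    ∃ C : ℕ, 0 < C ∧ ∀ n : Fin (d + 1) → ℕ, Function.Injective n →
      ∃ z : Fin (d + 1) → ℤ,
        (∀ i, |z i| ≤
          (C : ℤ) * ((Finset.univ.sup fun p : Fin (d + 1) × Fin (d + 1) =>
            n p.1 - n p.2 : ℕ) : ℤ) ^ (d * (d + 1) / 2)) ∧
        0 < |∑ i, z i * P.eval ((n i : ℤ))| ∧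
        |∑ i, z i * P.eval ((n i : ℤ))| ≤
          (C : ℤ) * ((Finset.univ.sup fun p : Fin (d + 1) × Fin (d + 1) =>
            n p.1 - n p.2 : ℕ) : ℤ) ^ (d * (d + 1) / 2) := by
  have hP0' : P ≠ 0 := by intro h; rw [h] at hPdeg; simp at hPdeg; omega
  have hlc : P.coeff d ≠ 0 := by
    rw [← hPdeg]; exact Polynomial.coeff_ne_zero_of_eq_degree (Polynomial.degree_eq_natDegree hP0')
  refine ⟨(P.coeff d).natAbs, Int.natAbs_pos.mpr hlc, fun n hn => ?_⟩
  set M : ℕ := Finset.univ.sup fun p : Fin (d + 1) × Fin (d + 1) => n p.1 - n p.2 with hM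
  set x : Fin (d+1) → ℤ := fun i => (n i : ℤ) with hxdef
  have hx : Function.Injective x := fun a b h => hn (Nat.cast_injective h)
  -- bound on differences
  have hdiff : ∀ i j : Fin (d+1), |x i - x j| ≤ (M : ℤ) := by
    intro i j
    have h1 : ((n i - n j : ℕ) : ℤ) ≤ (M : ℤ) := by
      exact_mod_cast Finset.le_sup (f := fun p : Fin (d + 1) × Fin (d + 1) => n p.1 - n p.2)
        (Finset.mem_univ (i, j))
    have h2 : ((n j - n i : ℕ) : ℤ) ≤ (M : ℤ) := by
      exact_mod_cast Finset.le_sup (f := fun p : Fin (d + 1) × Fin (d + 1) => n p.1 - n p.2)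
        (Finset.mem_univ (j, i))
    rw [abs_le]
    simp only [hxdef]
    omega
  have hM1 : 1 ≤ (M : ℤ) := by
    have h01 : (0 : Fin (d+1)) ≠ ⟨1, by omega⟩ := by
      intro h; exact absurd (congrArg Fin.val h) (by simp)
    have hne : n 0 ≠ n ⟨1, by omega⟩ := fun h => h01 (hn h)
    have h1 := Finset.le_sup (f := fun p : Fin (d + 1) × Fin (d + 1) => n p.1 - n p.2)
        (Finset.mem_univ ((0 : Fin (d+1)), ⟨1, by omega⟩))
    have h2 := Finset.le_sup (f := fun p : Fin (d + 1) × Fin (d + 1) => n p.1 - n p.2)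
        (Finset.mem_univ ((⟨1, by omega⟩ : Fin (d+1)), 0))
    rcases Nat.lt_or_ge (n 0) (n ⟨1, by omega⟩) with hlt | hge
    · have h3 : 1 ≤ n ⟨1, by omega⟩ - n 0 := by omega
      have h4 : 1 ≤ M := le_trans h3 h2
      exact_mod_cast h4
    · have hlt : n ⟨1, by omega⟩ < n 0 := lt_of_le_of_ne hge (fun h => hne h.symm)
      have h3 : 1 ≤ n 0 - n ⟨1, by omega⟩ := by omega
      have h4 : 1 ≤ M := le_trans h3 h1
      exact_mod_cast h4
  classical
  set S : Finset (Fin (d+1) × Fin (d+1)) :=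
    Finset.univ.filter (fun p => p.1 < p.2) with hS
  set D : ℤ := ∏ p ∈ S, (x p.2 - x p.1) with hD
  set w : Fin (d+1) → ℤ := fun i => ∏ j ∈ Finset.univ.erase i, (x i - x j) with hw
  have hw0 : ∀ i, w i ≠ 0 := by
    intro i
    refine Finset.prod_ne_zero_iff.mpr fun j hj => ?_
    have hne : i ≠ j := (Finset.ne_of_mem_erase hj).symm
    exact sub_ne_zero.mpr (fun h => hne (hx h))
  have hD0 : D ≠ 0 := by
    refine Finset.prod_ne_zero_iff.mpr fun p hp => ?_
    have hlt : p.1 < p.2 := (Finset.mem_filter.mp hp).2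
    exact sub_ne_zero.mpr (fun h => absurd (hx h).symm (ne_of_lt hlt))
  -- cardinality bound
  have hcardS : #S ≤ d * (d + 1) / 2 := by
    set T : Finset (Fin (d+1) × Fin (d+1)) :=
      Finset.univ.filter (fun p => p.2 < p.1) with hT
    have hcardeq : #S = #T := by
      refine Finset.card_nbij' (fun p => (p.2, p.1)) (fun p => (p.2, p.1)) ?_ ?_ ?_ ?_
      · intro p hp
        simp only [hS, hT, Finset.mem_filter, Finset.mem_univ, true_and, Finset.mem_coe] at hp ⊢
        exact hp
      · intro p hp
        simp only [hS, hT, Finset.mem_filter, Finset.mem_univ, true_and, Finset.mem_coe] at hp ⊢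
        exact hp
      · intro p _; rfl
      · intro p _; rfl
    have hdisj : Disjoint S T := by
      rw [Finset.disjoint_left]
      intro p hpS hpT
      simp only [hS, hT, Finset.mem_filter, Finset.mem_univ, true_and] at hpS hpT
      exact absurd hpS (not_lt_of_gt hpT)
    have hsub : S ∪ T ⊆ Finset.univ.offDiag := by
      intro p hp
      rcases Finset.mem_union.mp hp with h | h <;>
        simp only [hS, hT, Finset.mem_filter, Finset.mem_univ, true_and] at h <;>
        · rw [Finset.mem_offDiag]
          exact ⟨Finset.mem_univ _, Finset.mem_univ _, by omega⟩
    have hcard2 : #S + #T ≤ (d+1) * (d+1) - (d+1) := by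
      calc #S + #T = #(S ∪ T) := (Finset.card_union_of_disjoint hdisj).symm
        _ ≤ #(Finset.univ : Finset (Fin (d+1))).offDiag := Finset.card_le_card hsub
        _ = (d+1) * (d+1) - (d+1) := by
          rw [Finset.offDiag_card]; simp
    have hh : (d+1) * (d+1) = d*(d+1) + (d+1) := by ring
    omega
  -- divisibility
  have hwD : ∀ i, w i ∣ D := by
    intro i
    have key : ∏ j ∈ Finset.univ.erase i, |x i - x j|
        = ∏ p ∈ S.filter (fun p => p.1 = i ∨ p.2 = i), |x p.2 - x p.1| := by
      refine Finset.prod_nbij' (fun j => if j < i then (j, i) else (i, j))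
        (fun p => if p.1 = i then p.2 else p.1) ?_ ?_ ?_ ?_ ?_
      · intro j hj
        have hne : j ≠ i := Finset.ne_of_mem_erase hj
        simp only [hS, Finset.mem_filter, Finset.mem_univ, true_and]
        split_ifs with h
        · exact ⟨h, Or.inr rfl⟩
        · exact ⟨lt_of_le_of_ne (not_lt.mp h) (Ne.symm hne), Or.inl rfl⟩
      · intro p hp
        simp only [hS, Finset.mem_filter, Finset.mem_univ, true_and] at hp
        obtain ⟨⟨hlt, hor⟩, -⟩ := And.intro hp trivial
        rcases hor with h1 | h2
        · rw [if_pos h1]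
          exact Finset.mem_erase.mpr ⟨by omega, Finset.mem_univ _⟩
        · by_cases h1 : p.1 = i
          · rw [if_pos h1]
            exact Finset.mem_erase.mpr ⟨by omega, Finset.mem_univ _⟩
          · rw [if_neg h1]
            exact Finset.mem_erase.mpr ⟨by omega, Finset.mem_univ _⟩
      · intro j hj
        have hne : j ≠ i := Finset.ne_of_mem_erase hj
        by_cases h : j < i
        · rw [if_pos h]; dsimp only; rw [if_neg hne]
        · rw [if_neg h]; dsimp only; rw [if_pos rfl]
      · intro p hp
        simp only [hS, Finset.mem_filter, Finset.mem_univ, true_and] at hp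
        obtain ⟨hlt, hor⟩ := hp
        by_cases h1 : p.1 = i
        · rw [if_pos h1]
          have : ¬ p.2 < i := by omega
          rw [if_neg this]
          exact Prod.ext h1.symm rfl
        · have h2 : p.2 = i := by tauto
          rw [if_neg h1, if_pos (by omega : p.1 < i)]
          exact Prod.ext rfl h2.symm
      · intro j hj
        have hne : j ≠ i := Finset.ne_of_mem_erase hj
        split_ifs with h
        · rfl
        · exact abs_sub_comm _ _
    have hsubprod : (∏ p ∈ S.filter (fun p => p.1 = i ∨ p.2 = i), (x p.2 - x p.1)) ∣ D :=
      Finset.prod_dvd_prod_of_subset _ _ _ (Finset.filter_subset _ _)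
    have habs : |w i| = |∏ p ∈ S.filter (fun p => p.1 = i ∨ p.2 = i), (x p.2 - x p.1)| := by
      rw [hw]
      simp only
      rw [Finset.abs_prod, Finset.abs_prod, key]
    rw [← abs_dvd, habs, abs_dvd]
    exact hsubprod
  set z : Fin (d+1) → ℤ := fun i => D / w i with hz
  have hzw : ∀ i, z i * w i = D := fun i => Int.ediv_mul_cancel (hwD i)
  have hDle : |D| ≤ (M:ℤ) ^ (d*(d+1)/2) := by
    calc |D| = ∏ p ∈ S, |x p.2 - x p.1| := by rw [hD, Finset.abs_prod]
      _ ≤ ∏ p ∈ S, (M:ℤ) := Finset.prod_le_prod (fun p _ => abs_nonneg _) (fun p _ => hdiff _ _)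
      _ = (M:ℤ) ^ #S := by rw [Finset.prod_const]
      _ ≤ (M:ℤ) ^ (d*(d+1)/2) := pow_le_pow_right₀ hM1 hcardS
  have hzle : ∀ i, |z i| ≤ |D| := by
    intro i
    calc |z i| = |z i| * 1 := (mul_one _).symm
      _ ≤ |z i| * |w i| := mul_le_mul_of_nonneg_left (Int.one_le_abs (hw0 i)) (abs_nonneg _)
      _ = |z i * w i| := (abs_mul _ _).symm
      _ = |D| := by rw [hzw i]
  have hsum : ∑ i, z i * P.eval ((n i : ℤ)) = D * P.coeff d := by
    have hcast : ∀ i, ((z i : ℤ) : ℚ) = ((D : ℤ) : ℚ) / ((w i : ℤ) : ℚ) := fun i =>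
      Int.cast_div_charZero (hwD i)
    apply (Int.cast_injective (α := ℚ))
    push_cast
    rw [coeff_eq_sum d P hPdeg x hx, Finset.mul_sum]
    refine Finset.sum_congr rfl fun i _ => ?_
    rw [hcast i]
    have hwcast : ((w i : ℤ) : ℚ) = ∏ j ∈ Finset.univ.erase i, ((x i : ℚ) - (x j : ℚ)) := by
      rw [hw]; push_cast; rfl
    rw [hwcast, div_eq_mul_inv]
    ring
  have hone : (1 : ℤ) ≤ ((P.coeff d).natAbs : ℤ) := by
    have := Int.natAbs_pos.mpr hlc; exact_mod_cast this
  have hMpow : (0:ℤ) ≤ (M:ℤ) ^ (d*(d+1)/2) := by positivity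
  refine ⟨z, ?_, ?_, ?_⟩
  · intro i
    calc |z i| ≤ |D| := hzle i
      _ ≤ (M:ℤ) ^ (d*(d+1)/2) := hDle
      _ ≤ ((P.coeff d).natAbs : ℤ) * (M:ℤ) ^ (d*(d+1)/2) := le_mul_of_one_le_left hMpow hone
  · rw [hsum]
    exact abs_pos.mpr (mul_ne_zero hD0 hlc)
  · rw [hsum, abs_mul, Int.abs_eq_natAbs (P.coeff d), mul_comm]
    exact mul_le_mul_of_nonneg_left hDle (by positivity)
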